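/- Let A ∈ ℝ^{m×n}, b ∈ ℝ^m, e the all-ones vector in ℝ^m, and define ζ = min { bᵀ w : 0 ≤ w ≤ e, Aᵀ w = 0 }. Then the feasible set of this linear program is nonempty and compact, the minimum ζ is attained, and ζ ≤ 0. Moreover, ζ < 0 if and only if the system A z ≤ b has no solution. -/

import Mathlib

open Matrix



private lemma sum_drop_zero {E : Type} [AddCommMonoid E] {ι : Type} [Fintype ι]
    [DecidableEq ι] (f : ι → E) (i₀ : ι) (h : f i₀ = 0) :
    ∑ j : {j : ι // j ≠ i₀}, f j.1 = ∑ i : ι, f i :=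
  (Finset.sum_subtype (Finset.univ.erase i₀) (fun j => by simp) f).symm.trans
    (Finset.sum_erase _ h)

/-- Finitely generated cones in a finite-dimensional normed space are closed. -/
theorem fgCone_isClosed {E : Type} [NormedAddCommGroup E] [NormedSpace ℝ E]
    [FiniteDimensional ℝ E] :
    ∀ (k : ℕ) (ι : Type) (_ : Fintype ι), Fintype.card ι ≤ k → ∀ (v : ι → E),
      IsClosed {x : E | ∃ c : ι → ℝ, (∀ i, 0 ≤ c i) ∧ ∑ i, c i • v i = x} := by
  intro k
  induction k with
  | zero =>
    intro ι _ hcard v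
    have he : IsEmpty ι := Fintype.card_eq_zero_iff.mp (Nat.le_zero.mp hcard)
    have : {x : E | ∃ c : ι → ℝ, (∀ i, 0 ≤ c i) ∧ ∑ i, c i • v i = x} = {0} := by
      ext x
      simp [Finset.univ_eq_empty, eq_comm]
    rw [this]; exact isClosed_singleton
  | succ k ih =>
    intro ι _ hcard v
    classical
    by_cases hli : LinearIndependent ℝ v
    · -- image of the closed orthant under a closed embedding
      let T : (ι → ℝ) →ₗ[ℝ] E :=
        { toFun := fun c => ∑ i, c i • v i
          map_add' := by intro c c'; simp [add_smul, Finset.sum_add_distrib]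
          map_smul' := by intro r c; simp [Finset.smul_sum, smul_smul] }
      have hinj : Function.Injective T := by
        rw [← LinearMap.ker_eq_bot, LinearMap.ker_eq_bot']
        intro c hc
        have := Fintype.linearIndependent_iff.mp hli c hc
        funext i; exact this i
      have hemb : Topology.IsClosedEmbedding T := LinearMap.isClosedEmbedding_of_injective
        (LinearMap.ker_eq_bot.mpr hinj)
      have horth : IsClosed {c : ι → ℝ | ∀ i, 0 ≤ c i} := by
        have : {c : ι → ℝ | ∀ i, 0 ≤ c i} = ⋂ i, {c | 0 ≤ c i} := by
          ext c; simp
        rw [this]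
        exact isClosed_iInter fun i => isClosed_Ici.preimage (continuous_apply i)
      have : {x : E | ∃ c : ι → ℝ, (∀ i, 0 ≤ c i) ∧ ∑ i, c i • v i = x}
          = T '' {c : ι → ℝ | ∀ i, 0 ≤ c i} := by
        ext x; constructor
        · rintro ⟨c, hc, hsum⟩; exact ⟨c, hc, hsum⟩
        · rintro ⟨c, hc, hsum⟩; exact ⟨c, hc, hsum⟩
      rw [this]
      exact hemb.isClosedMap _ horth
    · -- dependent: the cone is a finite union of cones on smaller index sets
      obtain ⟨d₀, hdsum₀, i₁, hd₁⟩ := Fintype.not_linearIndependent_iff.mp hli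
      have key : ∃ d : ι → ℝ, ∑ i, d i • v i = 0 ∧ ∃ i, 0 < d i := by
        rcases lt_or_gt_of_ne hd₁ with h | h
        · refine ⟨-d₀, by simpa using hdsum₀, i₁, by simpa using h⟩
        · exact ⟨d₀, hdsum₀, i₁, h⟩
      obtain ⟨d, hdsum, i₂, hd₂⟩ := key
      have hunion : {x : E | ∃ c : ι → ℝ, (∀ i, 0 ≤ c i) ∧ ∑ i, c i • v i = x}
          = ⋃ i₀ : ι, {x : E | ∃ c : {j : ι // j ≠ i₀} → ℝ,
              (∀ i, 0 ≤ c i) ∧ ∑ i, c i • v i.1 = x} := by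
        ext x
        constructor
        · rintro ⟨c, hc, hsum⟩
          have hPne : ({i | 0 < d i} : Finset ι).Nonempty := ⟨i₂, by simpa using hd₂⟩
          obtain ⟨i₀, hi₀mem, hi₀min⟩ :=
            Finset.exists_min_image _ (fun i => c i / d i) hPne
          have hd₀ : 0 < d i₀ := by simpa using hi₀mem
          set t := c i₀ / d i₀ with ht
          have ht0 : 0 ≤ t := div_nonneg (hc i₀) hd₀.le
          set c' : ι → ℝ := fun i => c i - t * d i with hc'
          have hc'nonneg : ∀ i, 0 ≤ c' i := by
            intro i
            rcases le_or_gt (d i) 0 with h | h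
            · have : t * d i ≤ 0 := mul_nonpos_of_nonneg_of_nonpos ht0 h
              simp only [hc', sub_nonneg]
              exact this.trans (hc i)
            · have := hi₀min i (by simpa using h)
              simp only [hc', sub_nonneg]
              calc t * d i ≤ (c i / d i) * d i := mul_le_mul_of_nonneg_right this h.le
                _ = c i := div_mul_cancel₀ _ h.ne'
          have hc'₀ : c' i₀ • v i₀ = 0 := by
            simp [hc', ht, div_mul_cancel₀ _ hd₀.ne']
          have hsum' : ∑ i, c' i • v i = x := by
            have : ∑ i, c' i • v i = ∑ i, c i • v i - t • ∑ i, d i • v i := by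
              rw [Finset.smul_sum, ← Finset.sum_sub_distrib]
              congr 1; funext i; simp [hc', sub_smul, mul_smul]
            rw [this, hdsum, smul_zero, sub_zero, hsum]
          exact Set.mem_iUnion.mpr ⟨i₀, fun i => c' i.1, fun i => hc'nonneg i.1,
            (sum_drop_zero (fun i => c' i • v i) i₀ hc'₀).trans hsum'⟩
        · rintro hx
          obtain ⟨i₀, c, hc, hsum⟩ := Set.mem_iUnion.mp hx
          set f : ι → E := fun j => (if h : j = i₀ then 0 else c ⟨j, h⟩) • v j with hf
          refine ⟨fun j => if h : j = i₀ then 0 else c ⟨j, h⟩, fun j => ?_, ?_⟩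
          · by_cases h : j = i₀ <;> simp [h, hc]
          · have h0 : f i₀ = 0 := by simp [hf]
            rw [show (∑ i : ι, (if h : i = i₀ then 0 else c ⟨i, h⟩) • v i) = ∑ i : ι, f i
              from rfl, ← sum_drop_zero f i₀ h0, ← hsum]
            exact Finset.sum_congr rfl fun j _ => by simp [hf, j.2]
      rw [hunion]
      apply isClosed_iUnion_of_finite
      intro i₀
      have hcard' : Fintype.card {j : ι // j ≠ i₀} ≤ k := by
        have : Fintype.card {j : ι // j ≠ i₀} < Fintype.card ι :=
          Fintype.card_subtype_lt (x := i₀) (by simp)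
        omega
      exact ih _ _ hcard' _


section FarkasSetup

variable {m n : ℕ}

open scoped InnerProductSpace

/-- Farkas' lemma: if `A z ≤ b` has no solution, then there is `y ≥ 0`
with `Aᵀ y = 0` and `b ⬝ᵥ y < 0`. -/
theorem farkas_infeasible (A : Matrix (Fin m) (Fin n) ℝ) (b : Fin m → ℝ)
    (h : ¬ ∃ z : Fin n → ℝ, A *ᵥ z ≤ b) :
    ∃ y : Fin m → ℝ, (∀ i, 0 ≤ y i) ∧ Aᵀ *ᵥ y = 0 ∧ b ⬝ᵥ y < 0 := by
  classical
  set E := EuclideanSpace ℝ (Fin m) with hE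
  -- generators: ± columns of A and the standard basis vectors
  set ι := (Fin n ⊕ Fin n) ⊕ Fin m with hι
  set v : ι → E := Sum.elim
      (Sum.elim (fun j => WithLp.toLp 2 (fun i => A i j : Fin m → ℝ)) (fun j => WithLp.toLp 2 (fun i => -A i j : Fin m → ℝ)))
      (fun i => EuclideanSpace.single i 1) with hv
  -- the cone of points x such that A z ≤ x for some z
  set S : Set E := {x : E | ∃ c : ι → ℝ, (∀ i, 0 ≤ c i) ∧ ∑ i, c i • v i = x} with hS
  have hsmulapp : ∀ (r : ℝ) (u : E) (i' : Fin m), (r • u : E) i' = r * u i' :=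
    fun r u i' => rfl
  have hsingle : ∀ (i i' : Fin m), (EuclideanSpace.single i (1:ℝ) : E) i'
      = if i' = i then 1 else 0 := fun i i' => EuclideanSpace.single_apply i 1 i'
  have hmem : ∀ x : E, x ∈ S ↔ ∃ z : Fin n → ℝ, A *ᵥ z ≤ (x : Fin m → ℝ) := by
    intro x
    constructor
    · rintro ⟨c, hc, hsum⟩
      refine ⟨fun j => c (Sum.inl (Sum.inl j)) - c (Sum.inl (Sum.inr j)), fun i => ?_⟩
      have hx : (x : Fin m → ℝ) i = ∑ p : ι, (c p • v p : Fin m → ℝ) i := by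
        rw [← hsum]
        rw [WithLp.ofLp_sum, Finset.sum_apply]; rfl
      have hkey : (x : Fin m → ℝ) i =
          (∑ j, (c (Sum.inl (Sum.inl j)) - c (Sum.inl (Sum.inr j))) * A i j)
            + c (Sum.inr i) := by
        rw [hx, Fintype.sum_sum_type, Fintype.sum_sum_type]
        simp only [hv, Sum.elim_inl, Sum.elim_inr, Pi.smul_apply, smul_eq_mul, hsingle]
        have h0 : (∑ j : Fin m, c (Sum.inr j) * if i = j then 1 else 0) = c (Sum.inr i) := by
          simp [eq_comm]
        rw [h0, ← Finset.sum_add_distrib]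
        congr 1
        apply Finset.sum_congr rfl
        intro j _
        ring
      rw [mulVec, dotProduct]
      have hnn : 0 ≤ c (Sum.inr i) := hc _
      calc (∑ j, A i j * (c (Sum.inl (Sum.inl j)) - c (Sum.inl (Sum.inr j))))
          = ∑ j, (c (Sum.inl (Sum.inl j)) - c (Sum.inl (Sum.inr j))) * A i j := by
            apply Finset.sum_congr rfl; intros; ring
        _ ≤ (∑ j, (c (Sum.inl (Sum.inl j)) - c (Sum.inl (Sum.inr j))) * A i j)
            + c (Sum.inr i) := le_add_of_nonneg_right hnn
        _ = (x : Fin m → ℝ) i := hkey.symm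
    · rintro ⟨z, hz⟩
      refine ⟨Sum.elim (Sum.elim (fun j => max (z j) 0) (fun j => max (-z j) 0))
        (fun i => (x : Fin m → ℝ) i - (A *ᵥ z) i), ?_, ?_⟩
      · rintro ((j | j) | i)
        · simpa using le_max_right (z j) 0
        · simpa using le_max_right (-z j) 0
        · simpa using sub_nonneg.mpr (hz i)
      · ext i
        rw [show ((∑ p : ι, _ • v p : E) i) = ∑ p : ι, (_ • v p : Fin m → ℝ) i from by
          rw [WithLp.ofLp_sum, Finset.sum_apply]; rfl]
        rw [Fintype.sum_sum_type, Fintype.sum_sum_type]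
        simp only [hv, Sum.elim_inl, Sum.elim_inr, WithLp.ofLp_toLp, Pi.smul_apply, smul_eq_mul,
          hsingle]
        have h1 : (∑ j : Fin m, ((x : Fin m → ℝ) j - (A *ᵥ z) j) * if i = j then 1 else 0)
            = (x : Fin m → ℝ) i - (A *ᵥ z) i := by simp [eq_comm]
        rw [h1, ← Finset.sum_add_distrib]
        have h2 : ∀ j, max (z j) 0 * A i j + max (-z j) 0 * -A i j = A i j * z j := by
          intro j
          rcases le_or_gt (z j) 0 with hzj | hzj
          · rw [max_eq_right hzj, max_eq_left (by linarith)]; ring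
          · rw [max_eq_left hzj.le, max_eq_right (by linarith)]; ring
        rw [Finset.sum_congr rfl (fun j _ => h2 j)]
        rw [show (∑ j, A i j * z j) = (A *ᵥ z) i from rfl]
        ring
  -- S is a closed convex cone
  have hSclosed : IsClosed S := fgCone_isClosed (Fintype.card ι) ι inferInstance le_rfl v
  set K : ConvexCone ℝ E :=
    { carrier := S
      smul_mem' := by
        rintro r hr x ⟨c, hc, hsum⟩
        exact ⟨fun i => r * c i, fun i => mul_nonneg hr.le (hc i), by
          rw [← hsum, Finset.smul_sum]
          apply Finset.sum_congr rfl
          intro i _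
          exact mul_smul r (c i) (v i)⟩
      add_mem' := by
        rintro x ⟨c, hc, hsum⟩ y ⟨c', hc', hsum'⟩
        exact ⟨fun i => c i + c' i, fun i => add_nonneg (hc i) (hc' i), by
          rw [← hsum, ← hsum', ← Finset.sum_add_distrib]
          apply Finset.sum_congr rfl
          intro i _
          rw [add_smul]⟩ } with hK
  have hne : (K : Set E).Nonempty := ⟨0, (hmem 0).mpr ⟨0, by simp [mulVec_zero]⟩⟩
  have hbK : (WithLp.toLp 2 b : E) ∉ K := fun hb => h ((hmem (WithLp.toLp 2 b)).mp hb)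
  obtain ⟨y, hy, hyb⟩ :
      ∃ y : E, (∀ x ∈ K, 0 ≤ ⟪x, y⟫_ℝ) ∧ ⟪y, (WithLp.toLp 2 b : E)⟫_ℝ < 0 := by
    let C : ProperCone ℝ E :=
      { carrier := S
        add_mem' := fun hx hy => K.add_mem hx hy
        zero_mem' := (hmem 0).mpr ⟨0, by simp [mulVec_zero]⟩
        smul_mem' := by
          rintro r x ⟨c, hc, hsum⟩
          exact ⟨fun i => (r : ℝ) * c i, fun i => mul_nonneg r.2 (hc i), by
            rw [← hsum, Finset.smul_sum]
            apply Finset.sum_congr rfl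
            intro i _
            exact mul_smul (r : ℝ) (c i) (v i)⟩
        isClosed' := hSclosed }
    obtain ⟨y, hy, hyb⟩ := ProperCone.hyperplane_separation' C hbK
    exact ⟨y, hy, by rwa [real_inner_comm]⟩
  have hinner : ∀ x : E, ⟪x, y⟫_ℝ = ∑ i, (x : Fin m → ℝ) i * y i := by
    intro x
    rw [PiLp.inner_apply]
    simp [RCLike.inner_apply, mul_comm]
  refine ⟨(y : Fin m → ℝ), ?_, ?_, ?_⟩
  · intro i
    have hei : (EuclideanSpace.single i 1 : E) ∈ K :=
      (hmem _).mpr ⟨0, by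
        intro i'
        simp only [mulVec_zero, Pi.zero_apply]
        rw [show (EuclideanSpace.single i 1 : E) i' = if i' = i then (1:ℝ) else 0 from
          EuclideanSpace.single_apply i 1 i']
        positivity⟩
    have := hy _ hei
    rw [hinner] at this
    simpa [EuclideanSpace.single_apply, eq_comm] using this
  · funext j
    have hcol : ∀ s : ℝ, WithLp.toLp 2 (fun i => s * A i j : Fin m → ℝ) ∈ K := by
      intro s
      apply (hmem _).mpr
      exact ⟨fun j' => if j' = j then s else 0, le_of_eq (by
        funext i
        simp [mulVec, dotProduct, mul_comm])⟩
    have h1 := hy _ (hcol 1)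
    have h2 := hy _ (hcol (-1))
    rw [hinner] at h1 h2
    simp only [WithLp.ofLp_toLp, one_mul, neg_mul, Pi.zero_apply] at h1 h2
    have : ∑ i, A i j * y i = 0 := by
      have h2' : 0 ≤ -∑ i, A i j * y i := by rw [← Finset.sum_neg_distrib]; exact h2
      linarith
    rw [show ((Aᵀ *ᵥ (y : Fin m → ℝ)) j) = ∑ i, A i j * y i from by
      simp [mulVec, dotProduct, transpose_apply]]
    exact this
  · rw [show ⟪y, (WithLp.toLp 2 b : E)⟫_ℝ = ∑ i, y i * b i from by
      rw [PiLp.inner_apply]; simp [RCLike.inner_apply, mul_comm]] at hyb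
    rw [dotProduct]
    calc (∑ i, b i * y i) = ∑ i, y i * b i := by
          apply Finset.sum_congr rfl; intros; ring
      _ < 0 := hyb

end FarkasSetup
theorem collision_detection_LP (m n : ℕ) (A : Matrix (Fin m) (Fin n) ℝ)
    (b : Fin m → ℝ)
    (F : Set (Fin m → ℝ))
    (hF : F = {w | 0 ≤ w ∧ w ≤ (fun _ => 1) ∧ Aᵀ *ᵥ w = 0}) :
    F.Nonempty ∧ IsCompact F ∧
    ∃ w₀ ∈ F, (∀ w ∈ F, b ⬝ᵥ w₀ ≤ b ⬝ᵥ w) ∧ b ⬝ᵥ w₀ ≤ 0 ∧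
      (b ⬝ᵥ w₀ < 0 ↔ ¬ ∃ z : Fin n → ℝ, A *ᵥ z ≤ b) := by
  have hF0 : (0 : Fin m → ℝ) ∈ F := by
    rw [hF]
    refine ⟨le_refl 0, fun i => by norm_num, mulVec_zero _⟩
  have hne : F.Nonempty := ⟨0, hF0⟩
  have hclosed : IsClosed F := by
    rw [hF]
    have : {w : Fin m → ℝ | 0 ≤ w ∧ w ≤ (fun _ => 1) ∧ Aᵀ *ᵥ w = 0}
        = Set.Icc 0 (fun _ => 1) ∩ {w | Aᵀ *ᵥ w = 0} := by
      ext w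
      simp only [Set.mem_setOf_eq, Set.mem_inter_iff, Set.mem_Icc]
      tauto
    rw [this]
    refine isClosed_Icc.inter ?_
    have hcont : Continuous fun w : Fin m → ℝ => Aᵀ *ᵥ w := by
      have := (Aᵀ).mulVecLin.continuous_of_finiteDimensional
      exact this
    exact isClosed_singleton.preimage hcont
  have hsub : F ⊆ Set.Icc 0 (fun _ => 1) := by
    rw [hF]
    rintro w ⟨h1, h2, _⟩
    exact ⟨h1, h2⟩
  have hcompact : IsCompact F := IsCompact.of_isClosed_subset isCompact_Icc hclosed hsub
  have hcont : Continuous fun w : Fin m → ℝ => b ⬝ᵥ w := by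
    show Continuous fun w : Fin m → ℝ => ∑ i, b i * w i
    exact continuous_finset_sum _ fun i _ => continuous_const.mul (continuous_apply i)
  obtain ⟨w₀, hw₀F, hmin⟩ := hcompact.exists_isMinOn hne hcont.continuousOn
  have hmin' : ∀ w ∈ F, b ⬝ᵥ w₀ ≤ b ⬝ᵥ w := fun w hw => hmin hw
  have hle0 : b ⬝ᵥ w₀ ≤ 0 := by
    have := hmin' 0 hF0
    simpa [dotProduct_zero] using this
  refine ⟨hne, hcompact, w₀, hw₀F, hmin', hle0, ?_, ?_⟩
  · -- ζ < 0 → infeasible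
    rintro hlt ⟨z, hz⟩
    obtain ⟨hw₀0, hw₀1, hw₀A⟩ := hF ▸ hw₀F
    have h1 : 0 ≤ (b - A *ᵥ z) ⬝ᵥ w₀ :=
      Finset.sum_nonneg fun i _ =>
        mul_nonneg (sub_nonneg.mpr (hz i)) (hw₀0 i)
    have h2 : (A *ᵥ z) ⬝ᵥ w₀ = 0 := by
      rw [dotProduct_comm, dotProduct_mulVec, ← mulVec_transpose, hw₀A, zero_dotProduct]
    rw [sub_dotProduct, h2, sub_zero] at h1
    linarith
  · -- infeasible → ζ < 0
    intro hnf
    obtain ⟨y, hy0, hyA, hyb⟩ := farkas_infeasible A b hnf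
    set M : ℝ := 1 + ∑ i, y i with hM
    have hMpos : 0 < M := by
      have : 0 ≤ ∑ i, y i := Finset.sum_nonneg fun i _ => hy0 i
      linarith
    set w : Fin m → ℝ := M⁻¹ • y with hw
    have hwF : w ∈ F := by
      rw [hF]
      refine ⟨fun i => mul_nonneg (inv_nonneg.mpr hMpos.le) (hy0 i), fun i => ?_, ?_⟩
      · have hyi : y i ≤ M := by
          have : y i ≤ ∑ i', y i' :=
            Finset.single_le_sum (fun i' _ => hy0 i') (Finset.mem_univ i)
          linarith
        calc (M⁻¹ • y) i = y i / M := by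
              simp [Pi.smul_apply, smul_eq_mul, div_eq_inv_mul]
          _ ≤ 1 := (div_le_one hMpos).mpr hyi
      · rw [mulVec_smul, hyA, smul_zero]
    have hbw : b ⬝ᵥ w = M⁻¹ * (b ⬝ᵥ y) := by
      rw [hw, dotProduct_smul, smul_eq_mul]
    have : b ⬝ᵥ w < 0 := by
      rw [hbw]
      exact mul_neg_of_pos_of_neg (inv_pos.mpr hMpos) hyb
    exact lt_of_le_of_lt (hmin' w hwF) this
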